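/- Let X be a Hilbert space, A self-adjoint on X with QA ⊂ AQ where Q is the orthogonal projection onto Y = (ker Λ)^⊥ and P = I − Q, Λ closed densely defined and A-compact, and L_α = A − iαΛ. Then ρ_X(L_α) = ρ_Y(QL_α) ∩ ρ_N(PA), where QL_α = QA − iαQΛ acts in Y with domain D(A) ∩ Y and PA acts in N = ker Λ with domain D(A) ∩ N. Moreover, for ζ ∈ ρ_X(L_α) and f ∈ X, Q(ζ − L_α)^{−1} f = (ζ − QL_α)^{−1} Q f. -/

import Mathlib

open Filter

variable {X : Type*} [NormedAddCommGroup X] [InnerProductSpace ℂ X] [CompleteSpace X]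

set_option linter.unusedSectionVars false
set_option maxHeartbeats 1600000

local notation "⟪" x ", " y "⟫" => @inner ℂ _ _ x y

private lemma norm_le_add_of_inner_zero {n y : X} (h : ⟪n, y⟫ = 0) :
    ‖n‖ ≤ ‖n + y‖ ∧ ‖y‖ ≤ ‖n + y‖ := by
  have hsq : ‖n + y‖ ^ 2 = ‖n‖ ^ 2 + ‖y‖ ^ 2 := by
    rw [@norm_add_sq ℂ, h]
    simp
  constructor <;>
    nlinarith [norm_nonneg n, norm_nonneg y, norm_nonneg (n + y), sq_nonneg ‖n‖, sq_nonneg ‖y‖]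

private lemma selfadj_symm {A : X →ₗ.[ℂ] X} (hA : IsSelfAdjoint A) :
    ∀ u v : A.domain, ⟪A u, (v : X)⟫ = ⟪(u : X), A v⟫ := by
  have hAe : A.adjoint = A := hA
  have hdense : Dense (A.domain : Set X) := hA.dense_domain
  have h := LinearPMap.adjoint_isFormalAdjoint (T := A) hdense
  intro u v
  have h2 : A ≤ A.adjoint := le_of_eq hAe.symm
  have hu : (u : X) ∈ A.adjoint.domain := h2.1 u.2
  have h3 := h ⟨(u : X), hu⟩ v
  rwa [(le_of_eq hAe).2 (x := ⟨(u : X), hu⟩) (y := u) rfl] at h3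

private lemma selfadj_seq_closed {A : X →ₗ.[ℂ] X} (hA : IsSelfAdjoint A)
    (u : ℕ → A.domain) (x w : X)
    (hu : Tendsto (fun k => (u k : X)) atTop (nhds x))
    (hw : Tendsto (fun k => A (u k)) atTop (nhds w)) :
    ∃ hx : x ∈ A.domain, A ⟨x, hx⟩ = w := by
  have hAe : A.adjoint = A := hA
  have hdense : Dense (A.domain : Set X) := hA.dense_domain
  have hsym := selfadj_symm hA
  have key : ∀ v : A.domain, ⟪w, (v : X)⟫ = ⟪x, A v⟫ := by
    intro v
    have h1 : Tendsto (fun k => ⟪A (u k), (v : X)⟫) atTop (nhds ⟪w, (v : X)⟫) :=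
      (Tendsto.inner hw tendsto_const_nhds)
    have h2 : Tendsto (fun k => ⟪(u k : X), A v⟫) atTop (nhds ⟪x, A v⟫) :=
      (Tendsto.inner hu tendsto_const_nhds)
    have : (fun k => ⟪A (u k), (v : X)⟫) = fun k => ⟪(u k : X), A v⟫ := by
      funext k; exact hsym (u k) v
    rw [this] at h1
    exact tendsto_nhds_unique h1 h2
  have hxdom : x ∈ A.adjoint.domain :=
    LinearPMap.mem_adjoint_domain_of_exists (T := A) x ⟨w, fun v => key v⟩
  have hval : A.adjoint ⟨x, hxdom⟩ = w :=
    LinearPMap.adjoint_apply_eq hdense ⟨x, hxdom⟩ (fun v => key v)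
  have hxd : x ∈ A.domain := (le_of_eq hAe).1 hxdom
  refine ⟨hxd, ?_⟩
  rw [← hval]
  exact ((le_of_eq hAe).2 (x := ⟨x, hxdom⟩) (y := ⟨x, hxd⟩) rfl).symm

private lemma selfadj_eigen {A : X →ₗ.[ℂ] X} (hA : IsSelfAdjoint A) (g : X) (ζ : ℂ)
    (hbd : ∀ x : A.domain, ⟪g, A x⟫ = ζ * ⟪g, (x : X)⟫) :
    ∃ hg : g ∈ A.domain, A ⟨g, hg⟩ = (starRingEnd ℂ ζ) • g := by
  have hAe : A.adjoint = A := hA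
  have hdense : Dense (A.domain : Set X) := hA.dense_domain
  have key : ∀ x : A.domain, ⟪(starRingEnd ℂ ζ) • g, (x : X)⟫ = ⟪g, A x⟫ := by
    intro x
    rw [inner_smul_left, hbd x]
    simp
  have hxdom : g ∈ A.adjoint.domain :=
    LinearPMap.mem_adjoint_domain_of_exists (T := A) g ⟨(starRingEnd ℂ ζ) • g, key⟩
  have hval : A.adjoint ⟨g, hxdom⟩ = (starRingEnd ℂ ζ) • g :=
    LinearPMap.adjoint_apply_eq hdense ⟨g, hxdom⟩ key
  have hxd : g ∈ A.domain := (le_of_eq hAe).1 hxdom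
  refine ⟨hxd, ?_⟩
  rw [← hval]
  exact ((le_of_eq hAe).2 (x := ⟨g, hxdom⟩) (y := ⟨g, hxd⟩) rfl).symm

/-- `Λ` is `A`-compact: `D(A) ⊆ D(Λ)` and for every sequence `(u_k) ⊆ D(A)` with
`‖u_k‖ + ‖A u_k‖` bounded, `(Λ u_k)` has a convergent subsequence. -/
def IsRelCompact (A Λ : X →ₗ.[ℂ] X) (h : A.domain ≤ Λ.domain) : Prop :=
  ∀ u : ℕ → A.domain, (∃ M : ℝ, ∀ k, ‖(u k : X)‖ + ‖A (u k)‖ ≤ M) →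
    ∃ φ : ℕ → ℕ, StrictMono φ ∧ ∃ l : X,
      Tendsto (fun k => Λ ⟨(u (φ k) : X), h (u (φ k)).2⟩) atTop (nhds l)

/-- The operator `L_α = A − iαΛ` with domain `D(A)`. -/
noncomputable def pmapL (A Λ : X →ₗ.[ℂ] X) (h : A.domain ≤ Λ.domain) (α : ℝ) :
    X →ₗ.[ℂ] X :=
  ⟨A.domain, A.toFun - (Complex.I * (α : ℂ)) • (Λ.toFun.comp (Submodule.inclusion h))⟩

/-- `ζ` belongs to the resolvent set of the operator `T` restricted to the (invariant)
closed subspace `Y`, with domain `D(T) ∩ Y`: `ζ − T : D(T) ∩ Y → Y` is injective,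
onto `Y`, and has bounded inverse. -/
def ResolventOn (T : X →ₗ.[ℂ] X) (Y : Submodule ℂ X) (ζ : ℂ) : Prop :=
  (∀ u v : T.domain, (u : X) ∈ Y → (v : X) ∈ Y →
      ζ • (u : X) - T u = ζ • (v : X) - T v → (u : X) = (v : X)) ∧
  (∀ f ∈ Y, ∃ u : T.domain, (u : X) ∈ Y ∧ ζ • (u : X) - T u = f) ∧
  (∃ C : ℝ, ∀ u : T.domain, (u : X) ∈ Y → ‖(u : X)‖ ≤ C * ‖ζ • (u : X) - T u‖)

private lemma relbound (A Λ : X →ₗ.[ℂ] X) (hΛclosed : IsClosed (Λ.graph : Set (X × X)))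
    (hsub : A.domain ≤ Λ.domain) (hcpt : IsRelCompact A Λ hsub) {ε : ℝ} (hε : 0 < ε) :
    ∃ c : ℝ, 0 ≤ c ∧ ∀ u : A.domain, ‖Λ ⟨(u : X), hsub u.2⟩‖ ≤ ε * ‖A u‖ + c * ‖(u : X)‖ := by
  by_contra hcon
  push_neg at hcon
  have h : ∀ k : ℕ, ∃ u : A.domain,
      ε * ‖A u‖ + ((k : ℝ) + 1) * ‖(u : X)‖ < ‖Λ ⟨(u : X), hsub u.2⟩‖ := by
    intro k
    obtain ⟨u, hu⟩ := hcon ((k : ℝ) + 1) (by positivity)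
    exact ⟨u, hu⟩
  choose u hu using h
  have hrpos : ∀ k, 0 < ‖Λ ⟨(u k : X), hsub (u k).2⟩‖ := by
    intro k
    refine lt_of_le_of_lt ?_ (hu k)
    positivity
  set r : ℕ → ℝ := fun k => ‖Λ ⟨(u k : X), hsub (u k).2⟩‖ with hr
  set v : ℕ → A.domain := fun k => ((r k)⁻¹ : ℂ) • (u k) with hv
  have hvcoe : ∀ k, (v k : X) = ((r k)⁻¹ : ℂ) • (u k : X) := fun k => rfl
  have hAv : ∀ k, A (v k) = ((r k)⁻¹ : ℂ) • A (u k) := by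
    intro k; rw [hv]; exact A.map_smul _ _
  have hΛv : ∀ k, Λ ⟨(v k : X), hsub (v k).2⟩ = ((r k)⁻¹ : ℂ) • Λ ⟨(u k : X), hsub (u k).2⟩ := by
    intro k
    have : (⟨(v k : X), hsub (v k).2⟩ : Λ.domain) = ((r k)⁻¹ : ℂ) • ⟨(u k : X), hsub (u k).2⟩ :=
      Subtype.ext rfl
    rw [this]; exact Λ.map_smul _ _
  have hsc : ∀ k, ‖((r k : ℝ) : ℂ)⁻¹‖ = (r k)⁻¹ := by
    intro k
    rw [norm_inv, Complex.norm_real, Real.norm_eq_abs, abs_of_pos (hrpos k)]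
  have hnormv : ∀ k, ‖(v k : X)‖ = (r k)⁻¹ * ‖(u k : X)‖ := by
    intro k; rw [hvcoe, norm_smul, hsc]
  have hnormAv : ∀ k, ‖A (v k)‖ = (r k)⁻¹ * ‖A (u k)‖ := by
    intro k; rw [hAv, norm_smul, hsc]
  have hnormΛv : ∀ k, ‖Λ ⟨(v k : X), hsub (v k).2⟩‖ = 1 := by
    intro k; rw [hΛv, norm_smul, hsc]
    exact inv_mul_cancel₀ (ne_of_gt (hrpos k))
  have hkey : ∀ k, ε * ‖A (v k)‖ + ((k : ℝ) + 1) * ‖(v k : X)‖ < 1 := by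
    intro k
    have := hu k
    have h2 : (r k)⁻¹ * (ε * ‖A (u k)‖ + ((k : ℝ) + 1) * ‖(u k : X)‖) < (r k)⁻¹ * r k :=
      mul_lt_mul_of_pos_left this (inv_pos.mpr (hrpos k))
    rw [inv_mul_cancel₀ (ne_of_gt (hrpos k))] at h2
    calc ε * ‖A (v k)‖ + ((k : ℝ) + 1) * ‖(v k : X)‖
        = (r k)⁻¹ * (ε * ‖A (u k)‖ + ((k : ℝ) + 1) * ‖(u k : X)‖) := by
          rw [hnormAv, hnormv]; ring
      _ < 1 := h2
  have hbdd : ∃ M : ℝ, ∀ k, ‖(v k : X)‖ + ‖A (v k)‖ ≤ M := by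
    refine ⟨1 + ε⁻¹, fun k => ?_⟩
    have h1 := hkey k
    have hk1 : (0:ℝ) ≤ ((k : ℝ) + 1) * ‖(v k : X)‖ := by positivity
    have h2 : ε * ‖A (v k)‖ < 1 := by nlinarith
    have h3 : ‖A (v k)‖ ≤ ε⁻¹ := by nlinarith [mul_inv_cancel₀ hε.ne']
    have h4 : ‖(v k : X)‖ ≤ 1 := by
      nlinarith [mul_nonneg (Nat.cast_nonneg k : (0:ℝ) ≤ (k:ℝ)) (norm_nonneg ((v k : X))),
        mul_nonneg hε.le (norm_nonneg (A (v k)))]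
    linarith
  obtain ⟨φ, hφ, l, hl⟩ := hcpt v hbdd
  have hlnorm : ‖l‖ = 1 := by
    have h1 : Tendsto (fun k => ‖Λ ⟨(v (φ k) : X), hsub (v (φ k)).2⟩‖) atTop (nhds ‖l‖) :=
      hl.norm
    have h2 : (fun k => ‖Λ ⟨(v (φ k) : X), hsub (v (φ k)).2⟩‖) = fun _ => (1:ℝ) := by
      funext k; exact hnormΛv (φ k)
    rw [h2] at h1
    exact tendsto_nhds_unique h1 tendsto_const_nhds
  have hv0 : Tendsto (fun k => (v (φ k) : X)) atTop (nhds 0) := by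
    have hb : ∀ k, ‖(v (φ k) : X)‖ ≤ 1 / ((k : ℝ) + 1) := by
      intro k
      have h1 := hkey (φ k)
      have h2 : ((k : ℝ) + 1) * ‖(v (φ k) : X)‖ ≤ ((φ k : ℝ) + 1) * ‖(v (φ k) : X)‖ := by
        have : (k : ℝ) ≤ (φ k : ℝ) := Nat.cast_le.mpr (hφ.le_apply)
        nlinarith [norm_nonneg (v (φ k) : X)]
      have h3 : ((k : ℝ) + 1) * ‖(v (φ k) : X)‖ < 1 := by
        nlinarith [mul_nonneg hε.le (norm_nonneg (A (v (φ k))))]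
      rw [le_div_iff₀ (by positivity : (0:ℝ) < (k:ℝ) + 1)]
      linarith [h3]
    have hlim : Tendsto (fun k : ℕ => 1 / ((k : ℝ) + 1)) atTop (nhds 0) :=
      tendsto_one_div_add_atTop_nhds_zero_nat
    rw [tendsto_zero_iff_norm_tendsto_zero]
    exact squeeze_zero (fun k => norm_nonneg _) hb hlim
  have hgraph : ((0 : X), l) ∈ Λ.graph := by
    have hmem : ∀ k, ((v (φ k) : X), Λ ⟨(v (φ k) : X), hsub (v (φ k)).2⟩) ∈ Λ.graph := by
      intro k
      exact Λ.mem_graph ⟨(v (φ k) : X), hsub (v (φ k)).2⟩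
    exact hΛclosed.mem_of_tendsto (hv0.prodMk_nhds hl) (Eventually.of_forall hmem)
  obtain ⟨y, hy1, hy2⟩ := Λ.mem_graph_iff.mp hgraph
  have hy0 : y = 0 := Subtype.ext hy1
  rw [hy0, Λ.map_zero] at hy2
  have hl0 : l = 0 := by simpa using hy2.symm
  rw [hl0] at hlnorm
  simp at hlnorm

/-- Lemma `L:PS_Res` of the paper.  With `A` self-adjoint, `Λ` closed densely defined
and `A`-compact, `N = ker Λ`, `Y = N^⊥`, `Q` the orthogonal projection onto `Y`
(so `P = I − Q` projects onto `N`) with `QA ⊂ AQ`: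
`ρ_X(L_α) = ρ_Y(QL_α) ∩ ρ_N(PA)`, where `L_α = A − iαΛ` with domain `D(A)`,
`QL_α = QA − iαQΛ` acts in `Y` with domain `D(A) ∩ Y`, and `PA` acts in `N` with
domain `D(A) ∩ N`.  Moreover, for `ζ ∈ ρ_X(L_α)` and `f ∈ X`,
`Q(ζ − L_α)^{−1}f = (ζ − QL_α)^{−1}Qf`. -/
theorem stmt_9 (A Λ : X →ₗ.[ℂ] X) (hA : IsSelfAdjoint A)
    (hΛdense : Dense (Λ.domain : Set X))
    (hΛclosed : IsClosed (Λ.graph : Set (X × X)))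
    (hsub : A.domain ≤ Λ.domain)
    (hcpt : IsRelCompact A Λ hsub)
    (N : Submodule ℂ X)
    (hN : N = (LinearMap.ker Λ.toFun).map Λ.domain.subtype)
    (Q : X →L[ℂ] X)
    (hQmem : ∀ u : X, Q u ∈ Nᗮ)
    (hQid : ∀ u ∈ Nᗮ, Q u = u)
    (hQzero : ∀ u ∈ N, Q u = 0)
    (hQA : ∀ u : A.domain, ∃ h : Q (u : X) ∈ A.domain, Q (A u) = A ⟨Q (u : X), h⟩)
    (α : ℝ) (ζ : ℂ) :
    (ResolventOn (pmapL A Λ hsub α) ⊤ ζ ↔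
      (ResolventOn ⟨A.domain, Q.toLinearMap.comp (pmapL A Λ hsub α).toFun⟩ Nᗮ ζ ∧
        ResolventOn ⟨A.domain, (LinearMap.id - Q.toLinearMap).comp A.toFun⟩ N ζ)) ∧
    (ResolventOn (pmapL A Λ hsub α) ⊤ ζ →
      ∀ (f : X) (u : (pmapL A Λ hsub α).domain),
        ζ • (u : X) - pmapL A Λ hsub α u = f →
        ∀ w : A.domain, (w : X) ∈ Nᗮ →
          ζ • (w : X) - Q (pmapL A Λ hsub α ⟨(w : X), w.2⟩) = Q f →
          Q (u : X) = (w : X)) := by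
  have hsym := selfadj_symm hA
  set c : ℂ := Complex.I * (α : ℂ) with hc
  have hcnorm : ‖c‖ = |α| := by
    rw [hc, norm_mul, Complex.norm_I, one_mul, Complex.norm_real, Real.norm_eq_abs]
  -- N facts
  have hNmem : ∀ x : X, x ∈ N ↔ ∃ hx : x ∈ Λ.domain, Λ ⟨x, hx⟩ = 0 := by
    intro x
    rw [hN]
    constructor
    · rintro ⟨y, hy, rfl⟩
      exact ⟨y.2, by simpa using hy⟩
    · rintro ⟨hx, h0⟩
      exact ⟨⟨x, hx⟩, h0, rfl⟩
  have hNclosed : IsClosed (N : Set X) := by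
    have hset : (N : Set X) = (fun x => (x, (0 : X))) ⁻¹' (Λ.graph : Set (X × X)) := by
      ext x
      simp only [Set.mem_preimage, SetLike.mem_coe]
      constructor
      · intro hx
        obtain ⟨hd, h0⟩ := (hNmem x).mp hx
        rw [LinearPMap.mem_graph_iff]
        exact ⟨⟨x, hd⟩, rfl, h0⟩
      · intro hx
        obtain ⟨y, hy1, hy2⟩ := (LinearPMap.mem_graph_iff Λ).mp hx
        have hy1' : (y : X) = x := hy1
        have hxd : x ∈ Λ.domain := hy1' ▸ y.2
        refine (hNmem x).mpr ⟨hxd, ?_⟩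
        have hye : (⟨x, hxd⟩ : Λ.domain) = y := Subtype.ext hy1'.symm
        rw [hye, hy2]
    rw [hset]
    exact hΛclosed.preimage (continuous_id.prodMk continuous_const)
  haveI : CompleteSpace N := hNclosed.completeSpace_coe
  have hdecomp : ∀ x : X, x - Q x ∈ N := by
    intro x
    have hx : x ∈ N ⊔ Nᗮ := by
      rw [Submodule.sup_orthogonal_of_hasOrthogonalProjection]; exact Submodule.mem_top
    obtain ⟨n, hn, y, hy, rfl⟩ := Submodule.mem_sup.mp hx
    rw [map_add, hQzero n hn, hQid y hy, zero_add]
    simpa using hn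
  have horth : ∀ n ∈ N, ∀ y' ∈ Nᗮ, ⟪n, y'⟫ = 0 := fun n hn y' hy' =>
    (Submodule.mem_orthogonal N y').mp hy' n hn
  have hnle : ∀ n ∈ N, ∀ y' ∈ Nᗮ, ‖n‖ ≤ ‖n + y'‖ ∧ ‖y'‖ ≤ ‖n + y'‖ := fun n hn y' hy' =>
    norm_le_add_of_inner_zero (horth n hn y' hy')
  have hQle : ∀ x : X, ‖Q x‖ ≤ ‖x‖ := by
    intro x
    have h := (hnle _ (hdecomp x) _ (hQmem x)).2
    rwa [sub_add_cancel] at h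
  have hPle : ∀ x : X, ‖x - Q x‖ ≤ ‖x‖ := by
    intro x
    have h := (hnle _ (hdecomp x) _ (hQmem x)).1
    rwa [sub_add_cancel] at h
  have hQQ : ∀ x : X, Q (Q x) = Q x := fun x => hQid _ (hQmem x)
  have hQdomA : ∀ u : A.domain, Q (u : X) ∈ A.domain := fun u => (hQA u).choose
  have hQAval : ∀ u : A.domain, Q (A u) = A ⟨Q (u : X), hQdomA u⟩ := fun u => (hQA u).choose_spec
  have hPdomA : ∀ u : A.domain, (u : X) - Q (u : X) ∈ A.domain :=
    fun u => A.domain.sub_mem u.2 (hQdomA u)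
  have hPAval : ∀ u : A.domain, A ⟨(u : X) - Q (u : X), hPdomA u⟩ = A u - Q (A u) := by
    intro u
    have hsplit : (⟨(u : X) - Q (u : X), hPdomA u⟩ : A.domain) = u - ⟨Q (u : X), hQdomA u⟩ := by
      apply Subtype.ext; simp
    rw [hsplit, A.map_sub, hQAval]
  have hNΛ0 : ∀ (x : X) (hx : x ∈ Λ.domain), x ∈ N → Λ ⟨x, hx⟩ = 0 := by
    intro x hx hxN
    obtain ⟨hd, h0⟩ := (hNmem x).mp hxN
    exact h0
  have hQA0 : ∀ u : A.domain, (u : X) ∈ N → Q (A u) = 0 := by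
    intro u hu
    rw [hQAval u]
    have h0 : (⟨Q (u : X), hQdomA u⟩ : A.domain) = 0 := Subtype.ext (hQzero _ hu)
    rw [h0, A.map_zero]
  have hAN : ∀ u : A.domain, (u : X) ∈ N → A u ∈ N := by
    intro u hu
    have h := hdecomp (A u)
    rwa [hQA0 u hu, sub_zero] at h
  have hQAY : ∀ u : A.domain, (u : X) ∈ Nᗮ → Q (A u) = A u := by
    intro u hu
    rw [hQAval u]
    have he : (⟨Q (u : X), hQdomA u⟩ : A.domain) = u := Subtype.ext (hQid _ hu)
    rw [he]
  have hΛQ : ∀ u : A.domain, Λ ⟨(u : X), hsub u.2⟩ = Λ ⟨Q (u : X), hsub (hQdomA u)⟩ := by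
    intro u
    have hmem : (u : X) - Q (u : X) ∈ Λ.domain := ((hNmem _).mp (hdecomp (u : X))).choose
    have hsplit : (⟨(u : X), hsub u.2⟩ : Λ.domain) =
        ⟨Q (u : X), hsub (hQdomA u)⟩ + ⟨(u : X) - Q (u : X), hmem⟩ := by
      apply Subtype.ext; simp
    rw [hsplit, Λ.map_add, hNΛ0 _ hmem (hdecomp (u : X)), add_zero]
  -- linear maps
  set S : A.domain →ₗ[ℂ] X :=
    ζ • A.domain.subtype - (A.toFun - c • (Λ.toFun.comp (Submodule.inclusion hsub))) with hSdef
  have hS : ∀ u : A.domain, S u = ζ • (u : X) - pmapL A Λ hsub α u := fun _ => rfl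
  set Sq : A.domain →ₗ[ℂ] X :=
    ζ • A.domain.subtype -
      Q.toLinearMap.comp (A.toFun - c • (Λ.toFun.comp (Submodule.inclusion hsub))) with hSqdef
  have hSq : ∀ u : A.domain, Sq u = ζ • (u : X) - Q (pmapL A Λ hsub α u) := fun _ => rfl
  set Sp : A.domain →ₗ[ℂ] X :=
    ζ • A.domain.subtype - (LinearMap.id - Q.toLinearMap).comp A.toFun with hSpdef
  have hSp : ∀ u : A.domain, Sp u = ζ • (u : X) - (A u - Q (A u)) := fun _ => rfl
  have hLval : ∀ u : A.domain, pmapL A Λ hsub α u = A u - c • Λ ⟨(u : X), hsub u.2⟩ :=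
    fun _ => rfl
  -- structural identities
  have hQS : ∀ u : A.domain, Q (S u) = Sq ⟨Q (u : X), hQdomA u⟩ := by
    intro u
    rw [hS, hSq, hLval, hLval]
    simp only [map_sub, map_smul]
    rw [hΛQ u, ← hQAval u, hQQ]
  have hPS : ∀ u : A.domain, S u - Q (S u) = Sp ⟨(u : X) - Q (u : X), hPdomA u⟩ +
      c • (Λ ⟨(u : X), hsub u.2⟩ - Q (Λ ⟨(u : X), hsub u.2⟩)) := by
    intro u
    rw [hS, hSp, hLval, hPAval]
    simp only [map_sub, map_smul]
    rw [hQQ]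
    module
  have hSpN : ∀ n : A.domain, (n : X) ∈ N → Sp n = S n := by
    intro n hn
    rw [hS, hSp, hLval, hQA0 n hn, hNΛ0 _ (hsub n.2) hn]
    simp
  have hSqY : ∀ y : A.domain, (y : X) ∈ Nᗮ → Q (S y) = Sq y := by
    intro y hy
    rw [hQS y]
    have he : (⟨Q (y : X), hQdomA y⟩ : A.domain) = y := Subtype.ext (hQid _ hy)
    rw [he]
  have hPSY : ∀ y : A.domain, (y : X) ∈ Nᗮ →
      S y - Q (S y) = c • (Λ ⟨(y : X), hsub y.2⟩ - Q (Λ ⟨(y : X), hsub y.2⟩)) := by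
    intro y hy
    have h := hPS y
    have he : (⟨(y : X) - Q (y : X), hPdomA y⟩ : A.domain) = 0 := by
      apply Subtype.ext
      simp [hQid _ hy]
    rw [he, map_zero, zero_add] at h
    exact h
  -- forward direction
  have hforward : ResolventOn (pmapL A Λ hsub α) ⊤ ζ →
      (ResolventOn ⟨A.domain, Q.toLinearMap.comp (pmapL A Λ hsub α).toFun⟩ Nᗮ ζ ∧
        ResolventOn ⟨A.domain, (LinearMap.id - Q.toLinearMap).comp A.toFun⟩ N ζ) := by
    intro hres
    obtain ⟨hinj0, hsurj0, C0, hC0⟩ := hres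
    set C := max C0 0 with hCdef
    have hCnn : (0:ℝ) ≤ C := le_max_right _ _
    have hbound : ∀ u : A.domain, ‖(u : X)‖ ≤ C * ‖S u‖ := by
      intro u
      calc ‖(u : X)‖ ≤ C0 * ‖ζ • (u : X) - pmapL A Λ hsub α u‖ := hC0 u trivial
        _ = C0 * ‖S u‖ := by rw [hS]
        _ ≤ C * ‖S u‖ := mul_le_mul_of_nonneg_right (le_max_left _ _) (norm_nonneg _)
    have hker : ∀ u : A.domain, S u = 0 → (u : X) = 0 := by
      intro u h
      have h2 : ζ • (u : X) - pmapL A Λ hsub α u =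
          ζ • ((0 : (pmapL A Λ hsub α).domain) : X) - pmapL A Λ hsub α 0 := by
        rw [← hS u, h]
        simp
      simpa using hinj0 u 0 trivial trivial h2
    have hsurjS : ∀ f : X, ∃ u : A.domain, S u = f := by
      intro f
      obtain ⟨u, _, h⟩ := hsurj0 f trivial
      exact ⟨u, (hS u).trans h⟩
    -- surjectivity of ζ - A on N
    have hDsurj : ∀ f ∈ N, ∃ n : A.domain, (n : X) ∈ N ∧ S n = f := by
      intro f hf
      set K : Submodule ℂ X := (N.comap A.domain.subtype).map S with hKdef
      have hKmem : ∀ z : X, z ∈ K ↔ ∃ n : A.domain, (n : X) ∈ N ∧ S n = z := by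
        intro z
        constructor
        · rintro ⟨n, hn, rfl⟩
          exact ⟨n, hn, rfl⟩
        · rintro ⟨n, hn, rfl⟩
          exact ⟨n, hn, rfl⟩
      have hSNform : ∀ n : A.domain, (n : X) ∈ N → S n = ζ • (n : X) - A n := by
        intro n hn
        rw [hS, hLval, hNΛ0 _ (hsub n.2) hn, smul_zero, sub_zero]
      have hKN : ∀ z ∈ K, z ∈ N := by
        intro z hz
        obtain ⟨n, hn, rfl⟩ := (hKmem z).mp hz
        rw [hSNform n hn]
        exact N.sub_mem (N.smul_mem _ hn) (hAN n hn)
      have hKclosed : IsClosed (K : Set X) := by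
        refine IsSeqClosed.isClosed ?_
        intro k g hk hglim
        choose n hnN hSn using fun j => (hKmem (k j)).mp (hk j)
        have hcauchy : CauchySeq (fun j => (n j : X)) := by
          rw [Metric.cauchySeq_iff]
          intro δ hδ
          obtain ⟨T0, hT0⟩ := (Metric.cauchySeq_iff.mp hglim.cauchySeq) (δ / (C + 1))
            (by positivity)
          refine ⟨T0, fun i hi j hj => ?_⟩
          have h1 : ‖((n i - n j : A.domain) : X)‖ ≤ C * ‖S (n i - n j)‖ := hbound _
          rw [map_sub, hSn, hSn] at h1
          have h2 : dist (k i) (k j) < δ / (C + 1) := hT0 i hi j hj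
          rw [dist_eq_norm] at h2 ⊢
          have hcoe : ((n i - n j : A.domain) : X) = (n i : X) - (n j : X) := rfl
          rw [hcoe] at h1
          have h3 : C * ‖k i - k j‖ ≤ C * (δ / (C + 1)) :=
            mul_le_mul_of_nonneg_left h2.le hCnn
          have h4 : (C + 1) * (δ / (C + 1)) = δ := by field_simp
          nlinarith [norm_nonneg ((n i : X) - (n j : X))]
        obtain ⟨x, hx⟩ := cauchySeq_tendsto_of_complete hcauchy
        have hAn : ∀ j, A (n j) = ζ • (n j : X) - k j := by
          intro j
          have h := hSn j
          rw [hSNform _ (hnN j)] at h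
          rw [← h]
          abel
        have hAlim : Tendsto (fun j => A (n j)) atTop (nhds (ζ • x - g)) := by
          have he : (fun j => A (n j)) = fun j => ζ • (n j : X) - k j := funext hAn
          rw [he]
          exact (hx.const_smul ζ).sub hglim
        obtain ⟨hxdom, hAx⟩ := selfadj_seq_closed hA n x (ζ • x - g) hx hAlim
        have hxN : x ∈ N := hNclosed.mem_of_tendsto hx (Eventually.of_forall fun j => hnN j)
        refine (hKmem g).mpr ⟨⟨x, hxdom⟩, hxN, ?_⟩
        rw [hSNform _ hxN, hAx]
        abel
      haveI := hKclosed.completeSpace_coe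
      have hfK : f ∈ K ⊔ Kᗮ := by
        rw [Submodule.sup_orthogonal_of_hasOrthogonalProjection]
        exact Submodule.mem_top
      obtain ⟨kk, hkk, g, hg, hfkg⟩ := Submodule.mem_sup.mp hfK
      have hgN : g ∈ N := by
        have hgf : g = f - kk := by rw [← hfkg]; abel
        rw [hgf]
        exact N.sub_mem hf (hKN kk hkk)
      have hg0 : g = 0 := by
        by_cases hgz : g = 0
        · exact hgz
        exfalso
        have hbd : ∀ x : A.domain, ⟪g, A x⟫ = ζ * ⟪g, (x : X)⟫ := by
          intro x
          set m : A.domain := ⟨(x : X) - Q (x : X), hPdomA x⟩ with hm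
          have hmN : (m : X) ∈ N := hdecomp (x : X)
          have hSm : S m = ζ • ((m : X)) - (A x - Q (A x)) := by
            rw [hSNform m hmN]
            rw [show A m = A x - Q (A x) from hPAval x]
          have hSmK : S m ∈ K := (hKmem _).mpr ⟨m, hmN, rfl⟩
          have h2 : ⟪S m, g⟫ = 0 := (Submodule.mem_orthogonal K g).mp hg _ hSmK
          rw [hSm, inner_sub_left, inner_smul_left, sub_eq_zero] at h2
          -- h2 : conj ζ * ⟪m, g⟫ = ⟪A x - Q (A x), g⟫
          have h3 : ⟪g, A x - Q (A x)⟫ = ζ * ⟪g, (m : X)⟫ := by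
            have h2' := congrArg (starRingEnd ℂ) h2
            simpa [map_mul, inner_conj_symm, inner_sub_right] using h2'.symm
          have h4 : ⟪g, Q (A x)⟫ = 0 := horth g hgN _ (hQmem _)
          have h5 : ⟪g, Q (x : X)⟫ = 0 := horth g hgN _ (hQmem _)
          have h6 : ⟪g, A x⟫ = ⟪g, Q (A x)⟫ + ⟪g, A x - Q (A x)⟫ := by
            rw [← inner_add_right]
            congr 1
            abel
          rw [h6, h4, zero_add, h3]
          have h7 : ⟪g, (m : X)⟫ = ⟪g, (x : X)⟫ := by
            have : ((m : X)) = (x : X) - Q (x : X) := rfl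
            rw [this, inner_sub_right, h5, sub_zero]
          rw [h7]
        obtain ⟨hgdom, hgval⟩ := selfadj_eigen hA g ζ hbd
        have hgg : ⟪g, g⟫ ≠ 0 := by
          simpa [inner_self_eq_zero] using hgz
        have hζ : (starRingEnd ℂ) ζ = ζ := by
          have h1 := hsym ⟨g, hgdom⟩ ⟨g, hgdom⟩
          rw [hgval, inner_smul_left, inner_smul_right, starRingEnd_self_apply] at h1
          exact mul_right_cancel₀ hgg h1.symm |>.symm ▸ rfl
        have hSg : S ⟨g, hgdom⟩ = 0 := by
          rw [hS, hLval, hNΛ0 _ (hsub hgdom) hgN, smul_zero, sub_zero, hgval, hζ, sub_self]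
        exact hgz (hker ⟨g, hgdom⟩ hSg)
      rw [hg0, add_zero] at hfkg
      obtain ⟨nn, hnn, hSnn⟩ := (hKmem kk).mp hkk
      exact ⟨nn, hnn, by rw [hSnn, hfkg]⟩
    -- bound for Q-part
    have hqbound : ∀ y : A.domain, (y : X) ∈ Nᗮ → ‖(y : X)‖ ≤ C * ‖Sq y‖ := by
      intro y hy
      set w := Λ ⟨(y : X), hsub y.2⟩ with hw
      have hPA : w - Q w ∈ N := hdecomp _
      obtain ⟨m, hmN, hSm⟩ := hDsurj (-(c • (w - Q w))) (N.neg_mem (N.smul_mem c hPA))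
      have hSum : S (y + m) = Sq y := by
        rw [map_add, hSm]
        have h1 : S y = Sq y + c • (w - Q w) := by
          have h2 := hPSY y hy
          have h3 := hSqY y hy
          rw [h3] at h2
          have := eq_add_of_sub_eq h2
          rw [this]
          abel
        rw [h1]
        abel
      have hcoe : ((y + m : A.domain) : X) = (y : X) + (m : X) := rfl
      calc ‖(y : X)‖ ≤ ‖(m : X) + (y : X)‖ := (hnle _ hmN _ hy).2
        _ = ‖((y + m : A.domain) : X)‖ := by rw [hcoe, add_comm]
        _ ≤ C * ‖S (y + m)‖ := hbound _
        _ = C * ‖Sq y‖ := by rw [hSum]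
    constructor
    · -- ResolventOn Tq
      refine ⟨?_, ?_, ⟨C, ?_⟩⟩
      · intro u v hu hv heq
        have heq' : Sq u = Sq v := heq
        have h1 : Sq (u - v) = 0 := by rw [map_sub, heq', sub_self]
        have h2 : ((u - v : A.domain) : X) ∈ Nᗮ := Nᗮ.sub_mem hu hv
        have h3 := hqbound (u - v) h2
        rw [h1, norm_zero, mul_zero] at h3
        have h4 : ((u - v : A.domain) : X) = 0 := norm_eq_zero.mp (le_antisymm h3 (norm_nonneg _))
        have h5 : (u : X) - (v : X) = 0 := h4
        exact sub_eq_zero.mp h5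
      · intro f hf
        obtain ⟨u, hSu⟩ := hsurjS f
        refine ⟨⟨Q (u : X), hQdomA u⟩, hQmem _, ?_⟩
        show Sq ⟨Q (u : X), hQdomA u⟩ = f
        rw [← hQS u, hSu]
        exact hQid f hf
      · intro u hu
        exact hqbound u hu
    · -- ResolventOn Tp
      refine ⟨?_, ?_, ⟨C, ?_⟩⟩
      · intro u v hu hv heq
        have heq' : Sp u = Sp v := heq
        rw [hSpN u hu, hSpN v hv] at heq'
        have h1 : S (u - v) = 0 := by rw [map_sub, heq', sub_self]
        have h2 : ((u - v : A.domain) : X) = 0 := hker _ h1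
        have h5 : (u : X) - (v : X) = 0 := h2
        exact sub_eq_zero.mp h5
      · intro f hf
        obtain ⟨n, hnN, hSn⟩ := hDsurj f hf
        refine ⟨n, hnN, ?_⟩
        show Sp n = f
        rw [hSpN n hnN, hSn]
      · intro u hu
        show ‖(u : X)‖ ≤ C * ‖Sp u‖
        rw [hSpN u hu]
        exact hbound u
  refine ⟨⟨hforward, ?_⟩, ?_⟩
  · -- converse direction
    rintro ⟨⟨hqinj, hqsurj, Cq0, hCq0⟩, ⟨hpinj, hpsurj, Cp0, hCp0⟩⟩
    set Cq := max Cq0 0 with hCqdef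
    set Cp := max Cp0 0 with hCpdef
    have hCqnn : (0:ℝ) ≤ Cq := le_max_right _ _
    have hCpnn : (0:ℝ) ≤ Cp := le_max_right _ _
    have hqb : ∀ y : A.domain, (y : X) ∈ Nᗮ → ‖(y : X)‖ ≤ Cq * ‖Sq y‖ := by
      intro y hy
      calc ‖(y : X)‖ ≤ Cq0 * ‖Sq y‖ := hCq0 y hy
        _ ≤ Cq * ‖Sq y‖ := mul_le_mul_of_nonneg_right (le_max_left _ _) (norm_nonneg _)
    have hpb : ∀ n : A.domain, (n : X) ∈ N → ‖(n : X)‖ ≤ Cp * ‖Sp n‖ := by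
      intro n hn
      calc ‖(n : X)‖ ≤ Cp0 * ‖Sp n‖ := hCp0 n hn
        _ ≤ Cp * ‖Sp n‖ := mul_le_mul_of_nonneg_right (le_max_left _ _) (norm_nonneg _)
    set ε : ℝ := (2 * (|α| + 1))⁻¹ with hεdef
    have hεpos : 0 < ε := by positivity
    obtain ⟨c1, hc1nn, hc1⟩ := relbound A Λ hΛclosed hsub hcpt hεpos
    have hcε : ‖c‖ * ε ≤ 1 / 2 := by
      rw [hcnorm, hεdef]
      rw [← div_eq_mul_inv, div_le_div_iff₀ (by positivity) (by norm_num : (0:ℝ) < 2)]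
      nlinarith [abs_nonneg α]
    have hAb : ∀ y : A.domain, (y : X) ∈ Nᗮ →
        ‖A y‖ ≤ 2 * ‖Sq y‖ + 2 * (‖ζ‖ + ‖c‖ * c1) * ‖(y : X)‖ := by
      intro y hy
      set w := Λ ⟨(y : X), hsub y.2⟩ with hw
      have hrep : A y = ζ • (y : X) - Sq y + c • Q w := by
        rw [hSq, hLval]
        rw [map_sub, map_smul, hQAY y hy]
        abel
      have h1 : ‖A y‖ ≤ ‖ζ‖ * ‖(y : X)‖ + ‖Sq y‖ + ‖c‖ * ‖Q w‖ := by
        rw [hrep]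
        calc ‖ζ • (y : X) - Sq y + c • Q w‖ ≤ ‖ζ • (y : X) - Sq y‖ + ‖c • Q w‖ :=
              norm_add_le _ _
          _ ≤ ‖ζ • (y : X)‖ + ‖Sq y‖ + ‖c • Q w‖ := by
              have := norm_sub_le (ζ • (y : X)) (Sq y)
              linarith
          _ = ‖ζ‖ * ‖(y : X)‖ + ‖Sq y‖ + ‖c‖ * ‖Q w‖ := by rw [norm_smul, norm_smul]
      have h2 : ‖Q w‖ ≤ ε * ‖A y‖ + c1 * ‖(y : X)‖ := le_trans (hQle _) (hc1 y)
      have h3 : ‖c‖ * ‖Q w‖ ≤ ‖c‖ * (ε * ‖A y‖ + c1 * ‖(y : X)‖) :=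
        mul_le_mul_of_nonneg_left h2 (norm_nonneg _)
      have h4 : ‖c‖ * ε * ‖A y‖ ≤ (1/2) * ‖A y‖ :=
        mul_le_mul_of_nonneg_right hcε (norm_nonneg _)
      nlinarith [mul_nonneg (norm_nonneg c) (mul_nonneg hc1nn (norm_nonneg ((y : X))))]
    set K3 : ℝ := ε * 2 + (ε * (2 * (‖ζ‖ + ‖c‖ * c1)) + c1) * Cq with hK3def
    have hK3nn : 0 ≤ K3 := by
      have h1 : 0 ≤ ‖ζ‖ + ‖c‖ * c1 := by positivity
      have : 0 ≤ ε * (2 * (‖ζ‖ + ‖c‖ * c1)) + c1 := by positivity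
      positivity
    have hΛb : ∀ y : A.domain, (y : X) ∈ Nᗮ →
        ‖Λ ⟨(y : X), hsub y.2⟩‖ ≤ K3 * ‖Sq y‖ := by
      intro y hy
      have h1 := hc1 y
      have h2 := hAb y hy
      have h3 := hqb y hy
      have hεnn := hεpos.le
      have h4 : ε * ‖A y‖ ≤ ε * (2 * ‖Sq y‖ + 2 * (‖ζ‖ + ‖c‖ * c1) * ‖(y : X)‖) :=
        mul_le_mul_of_nonneg_left h2 hεnn
      have h5 : (ε * (2 * (‖ζ‖ + ‖c‖ * c1)) + c1) * ‖(y : X)‖ ≤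
          (ε * (2 * (‖ζ‖ + ‖c‖ * c1)) + c1) * (Cq * ‖Sq y‖) := by
        apply mul_le_mul_of_nonneg_left h3
        have : 0 ≤ ‖ζ‖ + ‖c‖ * c1 := by positivity
        positivity
      rw [hK3def]
      nlinarith [norm_nonneg ((y : X)), mul_nonneg hεnn
        (mul_nonneg (by positivity : (0:ℝ) ≤ 2 * (‖ζ‖ + ‖c‖ * c1)) (norm_nonneg ((y : X))))]
    refine ⟨?_, ?_, ⟨Cq + Cp * (1 + ‖c‖ * K3), ?_⟩⟩
    · -- injectivity
      intro u v _ _ heq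
      have heqS : S u = S v := by
        rw [hS u, hS v]
        exact heq
      have h1 : Sq ⟨Q (u : X), hQdomA u⟩ = Sq ⟨Q (v : X), hQdomA v⟩ := by
        rw [← hQS u, ← hQS v, heqS]
      have hQuv : Q (u : X) = Q (v : X) :=
        hqinj ⟨Q (u : X), hQdomA u⟩ ⟨Q (v : X), hQdomA v⟩ (hQmem _) (hQmem _) h1
      have hL : Λ ⟨(u : X), hsub u.2⟩ = Λ ⟨(v : X), hsub v.2⟩ := by
        rw [hΛQ u, hΛQ v]
        exact congrArg _ (Subtype.ext hQuv)
      have hPuv : (u : X) - Q (u : X) = (v : X) - Q (v : X) := by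
        have e1 := hPS u
        have e2 := hPS v
        rw [heqS, hL] at e1
        have h2 : Sp ⟨(u : X) - Q (u : X), hPdomA u⟩ = Sp ⟨(v : X) - Q (v : X), hPdomA v⟩ :=
          add_right_cancel (e1.symm.trans e2)
        exact hpinj ⟨(u : X) - Q (u : X), hPdomA u⟩ ⟨(v : X) - Q (v : X), hPdomA v⟩
          (hdecomp (u : X)) (hdecomp (v : X)) (by exact h2)
      calc (u : X) = ((u : X) - Q (u : X)) + Q (u : X) := by abel
        _ = ((v : X) - Q (v : X)) + Q (v : X) := by rw [hPuv, hQuv]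
        _ = (v : X) := by abel
    · -- surjectivity
      intro f _
      obtain ⟨y, hyY, hy⟩ := hqsurj (Q f) (hQmem f)
      have hy' : Sq y = Q f := hy
      set w := Λ ⟨(y : X), hsub y.2⟩ with hw
      have hrN : (f - Q f) - c • (w - Q w) ∈ N :=
        N.sub_mem (hdecomp f) (N.smul_mem c (hdecomp w))
      obtain ⟨n, hnN, hn⟩ := hpsurj _ hrN
      have hn' : Sp n = (f - Q f) - c • (w - Q w) := hn
      rw [hSpN n hnN] at hn'
      refine ⟨y + n, trivial, ?_⟩
      show S (y + n) = f
      rw [map_add, hn']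
      have h1 : S y = Sq y + c • (w - Q w) := by
        have h2 := hPSY y hyY
        have h3 := hSqY y hyY
        rw [h3] at h2
        have h4 := eq_add_of_sub_eq h2
        rw [h4]
        abel
      rw [h1, hy']
      abel
    · -- bound
      intro u _
      show ‖(u : X)‖ ≤ (Cq + Cp * (1 + ‖c‖ * K3)) * ‖S u‖
      set b := S u with hb
      set w := Λ ⟨(u : X), hsub u.2⟩ with hw
      have hyY : (Q ((u : X)) : X) ∈ Nᗮ := hQmem _
      have hQb : Sq ⟨Q (u : X), hQdomA u⟩ = Q b := (hQS u).symm
      have h1 : ‖Q (u : X)‖ ≤ Cq * ‖Q b‖ := by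
        have h := hqb ⟨Q (u : X), hQdomA u⟩ hyY
        rwa [hQb] at h
      have h2 : Sp ⟨(u : X) - Q (u : X), hPdomA u⟩ = (b - Q b) - c • (w - Q w) := by
        have h3 := hPS u
        rw [← hb, ← hw] at h3
        have := eq_sub_of_add_eq h3.symm
        rw [this]
      have h4 : ‖(u : X) - Q (u : X)‖ ≤ Cp * ‖(b - Q b) - c • (w - Q w)‖ := by
        have h := hpb ⟨(u : X) - Q (u : X), hPdomA u⟩ (hdecomp (u : X))
        rwa [h2] at h
      have h5 : ‖w‖ ≤ K3 * ‖Q b‖ := by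
        have h6 : w = Λ ⟨Q (u : X), hsub (hQdomA u)⟩ := by rw [hw, hΛQ u]
        have h7 := hΛb ⟨Q (u : X), hQdomA u⟩ hyY
        rw [hQb] at h7
        rw [h6]
        exact h7
      have h8 : ‖(b - Q b) - c • (w - Q w)‖ ≤ ‖b‖ + ‖c‖ * ‖w‖ := by
        calc ‖(b - Q b) - c • (w - Q w)‖ ≤ ‖b - Q b‖ + ‖c • (w - Q w)‖ := norm_sub_le _ _
          _ = ‖b - Q b‖ + ‖c‖ * ‖w - Q w‖ := by rw [norm_smul]
          _ ≤ ‖b‖ + ‖c‖ * ‖w‖ := by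
              have := hPle b
              have := hPle w
              have hcnn := norm_nonneg c
              nlinarith [hPle b, hPle w, norm_nonneg c]
      have h9 : ‖Q b‖ ≤ ‖b‖ := hQle b
      have h10 : ‖(u : X)‖ ≤ ‖(u : X) - Q (u : X)‖ + ‖Q (u : X)‖ := by
        have := norm_add_le ((u : X) - Q (u : X)) (Q (u : X))
        simpa using this
      have h11 : ‖c‖ * ‖w‖ ≤ ‖c‖ * (K3 * ‖b‖) := by
        apply mul_le_mul_of_nonneg_left _ (norm_nonneg c)
        calc ‖w‖ ≤ K3 * ‖Q b‖ := h5
          _ ≤ K3 * ‖b‖ := mul_le_mul_of_nonneg_left h9 hK3nn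
      nlinarith [mul_le_mul_of_nonneg_left h9 hCqnn, norm_nonneg b,
        mul_le_mul_of_nonneg_left h8 hCpnn,
        mul_le_mul_of_nonneg_left h11 hCpnn]
  · -- moreover
    intro hres f u hu w hwY hw
    obtain ⟨⟨hqinj, _, _⟩, _⟩ := hforward hres
    have hSu : S u = f := (hS u).trans hu
    have h1 : Sq ⟨Q (u : X), hQdomA u⟩ = Q f := by rw [← hQS u, hSu]
    have h2 : Sq w = Q f := hw
    exact hqinj ⟨Q (u : X), hQdomA u⟩ w (hQmem _) hwY (h1.trans h2.symm)
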